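/- Let n ≥ 1 be an integer and Q₁(x,z), Q₂(x,z) ∈ ℂ[x,z] polynomials with deg_z Q₁(0,z) ≥ 2 and deg_z Q₂(0,z) ≥ 2, and suppose Q₂(x,z) = (1 + x·π(x,z))·Q₁(x,z) + x^n·R(x,z) for some polynomials π(x,z), R(x,z) ∈ ℂ[x,z]. Then the ℂ-algebra endomorphism Φ of ℂ[x,y,z] determined by Φ(x) = x, Φ(y) = (1 + x·π(x,z))·y + R(x,z), Φ(z) = z satisfies Φ(x^n y − Q₂(x,z)) = (1 + x·π(x,z))·(x^n y − Q₁(x,z)), and it induces a ℂ-algebra isomorphism from S_{Q₂,n} = ℂ[x,y,z]/(x^n y − Q₂(x,z)) onto S_{Q₁,n} = ℂ[x,y,z]/(x^n y − Q₁(x,z)). -/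

import Mathlib

open MvPolynomial

noncomputable section

/-- The polynomial ring `ℂ[x,y,z]`, with `X 0 = x`, `X 1 = y`, `X 2 = z`. -/
abbrev R3 := MvPolynomial (Fin 3) ℂ

/-- The polynomial ring `ℂ[x,z]`, with `X 0 = x`, `X 1 = z`. -/
abbrev R2 := MvPolynomial (Fin 2) ℂ

/-- The embedding `ℂ[x,z] → ℂ[x,y,z]`, `x ↦ x`, `z ↦ z`. -/
def toXYZ : R2 →ₐ[ℂ] R3 := aeval ![X 0, X 2]

/-- The defining polynomial `x^n y - Q(x,z)` of the Danielewski hypersurface `X_{Q,n}`. -/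
def danPoly (Q : R2) (n : ℕ) : R3 := X 0 ^ n * X 1 - toXYZ Q

/-- The coordinate ring `S_{Q,n} = ℂ[x,y,z]/(x^n y - Q(x,z))`. -/
abbrev danRing (Q : R2) (n : ℕ) := R3 ⧸ Ideal.span {danPoly Q n}

/-- The quotient projection `ℂ[x,y,z] → S_{Q,n}`. -/
def danProj (Q : R2) (n : ℕ) : R3 →ₐ[ℂ] danRing Q n := Ideal.Quotient.mkₐ ℂ _

/-- `Q(0,z)` as a univariate polynomial in `z`. -/
def Q0 (Q : R2) : Polynomial ℂ := aeval ![0, Polynomial.X] Q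

/-- A derivation is locally nilpotent if every element is killed by some iterate. -/
def IsLND {A : Type*} [CommRing A] [Algebra ℂ A] (δ : Derivation ℂ A A) : Prop :=
  ∀ a : A, ∃ m : ℕ, 1 ≤ m ∧ (⇑δ)^[m] a = 0

/-- Two Danielewski hypersurfaces are equivalent if some algebra automorphism of
`ℂ[x,y,z]` maps the ideal `(x^{n₁} y - Q₁)` onto the ideal `(x^{n₂} y - Q₂)`. -/
def DanEquiv (Q₁ : R2) (n₁ : ℕ) (Q₂ : R2) (n₂ : ℕ) : Prop :=
  ∃ Φ : R3 ≃ₐ[ℂ] R3,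
    Ideal.map Φ.toAlgHom.toRingHom (Ideal.span {danPoly Q₁ n₁}) = Ideal.span {danPoly Q₂ n₂}

/-- `X_{Q,n}` is in standard form if `Q = p(z) + x q(x,z)` with `deg_z q < deg p`. -/
def IsStandardForm (Q : R2) : Prop :=
  ∃ (p : Polynomial ℂ) (q : R2),
    Q = Polynomial.aeval (X 1) p + X 0 * q ∧ (q = 0 ∨ degreeOf 1 q < p.natDegree)

/-- `X_{Q,n}` is in reduced standard form if moreover `deg_x Q < n` and
`deg_z q < deg p - 1`. -/
def IsReducedStandardForm (Q : R2) (n : ℕ) : Prop :=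
  degreeOf 0 Q < n ∧
  ∃ (p : Polynomial ℂ) (q : R2),
    Q = Polynomial.aeval (X 1) p + X 0 * q ∧ (q = 0 ∨ degreeOf 1 q < p.natDegree - 1)

/-- auxiliary: the substitution endomorphism -/
def Phi (π R : R2) : R3 →ₐ[ℂ] R3 :=
  aeval ![X 0, (1 + X 0 * toXYZ π) * X 1 + toXYZ R, X 2]

lemma toXYZ_X0 : toXYZ (X 0) = (X 0 : R3) := by simp [toXYZ]

lemma Phi_toXYZ (π R Q : R2) : Phi π R (toXYZ Q) = toXYZ Q := by
  have h : (Phi π R).comp toXYZ = toXYZ := by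
    apply MvPolynomial.algHom_ext
    intro i
    fin_cases i <;> simp [toXYZ, Phi]
  exact AlgHom.congr_fun h Q

lemma Phi_X0 (π R : R2) : Phi π R (X 0) = (X 0 : R3) := by simp [Phi]
lemma Phi_X1 (π R : R2) :
    Phi π R (X 1) = (1 + X 0 * toXYZ π) * X 1 + toXYZ R := by simp [Phi]

lemma keycalc (n : ℕ) (Q₁ Q₂ π R : R2)
    (hQ : Q₂ = (1 + X 0 * π) * Q₁ + X 0 ^ n * R) :
    Phi π R (danPoly Q₂ n) = (1 + X 0 * toXYZ π) * danPoly Q₁ n := by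
  have h2 := congrArg toXYZ hQ
  simp only [map_add, map_mul, map_one, map_pow, toXYZ_X0] at h2
  simp only [danPoly, map_sub, map_mul, map_pow, Phi_toXYZ, Phi_X0, Phi_X1]
  rw [h2]; ring

lemma mem_key (n : ℕ) (Q₁ Q₂ π R : R2)
    (hQ : Q₂ = (1 + X 0 * π) * Q₁ + X 0 ^ n * R) :
    ∀ a ∈ Ideal.span {danPoly Q₂ n}, (danProj Q₁ n).comp (Phi π R) a = 0 := by
  intro a ha
  rw [Ideal.mem_span_singleton] at ha
  obtain ⟨c, rfl⟩ := ha
  rw [AlgHom.comp_apply, map_mul, keycalc n Q₁ Q₂ π R hQ]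
  have hm : (1 + X 0 * toXYZ π) * danPoly Q₁ n * Phi π R c ∈
      Ideal.span {danPoly Q₁ n} :=
    Ideal.mul_mem_right _ _ (Ideal.mul_mem_left _ _
      (Ideal.subset_span (Set.mem_singleton _)))
  simpa [danProj, Ideal.Quotient.eq_zero_iff_mem] using hm

/-- induced hom on quotients -/
def phiBar (n : ℕ) (Q₁ Q₂ π R : R2)
    (hQ : Q₂ = (1 + X 0 * π) * Q₁ + X 0 ^ n * R) :
    danRing Q₂ n →ₐ[ℂ] danRing Q₁ n :=
  Ideal.Quotient.liftₐ _ ((danProj Q₁ n).comp (Phi π R)) (mem_key n Q₁ Q₂ π R hQ)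

lemma phiBar_apply (n : ℕ) (Q₁ Q₂ π R : R2)
    (hQ : Q₂ = (1 + X 0 * π) * Q₁ + X 0 ^ n * R) (f : R3) :
    phiBar n Q₁ Q₂ π R hQ (danProj Q₂ n f) = danProj Q₁ n (Phi π R f) := by
  simp [phiBar, danProj]
  exact Ideal.Quotient.lift_mk _ _ _


lemma Phi_X2 (π R : R2) : Phi π R (X 2) = (X 2 : R3) := by simp [Phi]

lemma danProj_dan_mul (Q : R2) (n : ℕ) (c : R3) :
    danProj Q n (c * danPoly Q n) = 0 := by
  simp [danProj, Ideal.Quotient.eq_zero_iff_mem,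
    Ideal.mul_mem_left _ _ (Ideal.subset_span (Set.mem_singleton _))]

/-- if `Q₂ = (1 + x π) Q₁ + x^n R`, then the endomorphism
`(x,y,z) ↦ (x, (1 + x π) y + R, z)` of `ℂ[x,y,z]` maps `x^n y - Q₂` to
`(1 + x π)(x^n y - Q₁)` and induces an isomorphism `S_{Q₂,n} → S_{Q₁,n}`. -/
theorem stmt_11 (n : ℕ) (hn : 1 ≤ n) (Q₁ Q₂ : R2)
    (hQ₁ : 2 ≤ (Q0 Q₁).natDegree) (hQ₂ : 2 ≤ (Q0 Q₂).natDegree)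
    (π R : R2) (hQ : Q₂ = (1 + X 0 * π) * Q₁ + X 0 ^ n * R) :
    (aeval ![X 0, (1 + X 0 * toXYZ π) * X 1 + toXYZ R, X 2] : R3 →ₐ[ℂ] R3)
        (danPoly Q₂ n) = (1 + X 0 * toXYZ π) * danPoly Q₁ n ∧
    ∃ φ : danRing Q₂ n ≃ₐ[ℂ] danRing Q₁ n,
      ∀ f : R3,
        φ (danProj Q₂ n f) =
          danProj Q₁ n
            ((aeval ![X 0, (1 + X 0 * toXYZ π) * X 1 + toXYZ R, X 2] : R3 →ₐ[ℂ] R3) f) := by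
  refine ⟨keycalc n Q₁ Q₂ π R hQ, ?_⟩
  obtain ⟨σ, s, huv⟩ :
      ∃ σ s : R2, (1 + X 0 * π) * (1 + X 0 * σ) = 1 + X 0 ^ n * s := by
    refine ⟨-π * ∑ k ∈ Finset.range (n - 1), (-(X 0 * π)) ^ k, -(-π) ^ n, ?_⟩
    have hv : (1 : R2) + X 0 * (-π * ∑ k ∈ Finset.range (n - 1), (-(X 0 * π)) ^ k)
        = ∑ k ∈ Finset.range n, (-(X 0 * π)) ^ k := by
      obtain ⟨m, rfl⟩ : ∃ m, n = m + 1 := ⟨n - 1, (Nat.succ_pred_eq_of_pos hn).symm⟩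
      rw [geom_sum_succ, Nat.add_sub_cancel]
      ring
    rw [hv]
    have h1 := mul_geom_sum (-(X 0 * π)) n
    have hx : (-(X 0 * π)) ^ n = X 0 ^ n * (-π) ^ n := by
      rw [show -(X 0 * π) = X 0 * (-π) by ring, mul_pow]
    linear_combination -h1 - hx
  obtain ⟨R', hQ', hA, hB⟩ :
      ∃ R' : R2, Q₁ = (1 + X 0 * σ) * Q₂ + X 0 ^ n * R' ∧
        (1 + X 0 * σ) * R + R' = -(s * Q₁) ∧
        (1 + X 0 * π) * R' + R = -(s * Q₂) := by
    refine ⟨-(s * Q₁ + (1 + X 0 * σ) * R), ?_, by ring, ?_⟩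
    · rw [hQ]; linear_combination (-Q₁) * huv
    · rw [hQ]; linear_combination (-R) * huv
  have huv' := congrArg toXYZ huv
  have hA' := congrArg toXYZ hA
  have hB' := congrArg toXYZ hB
  simp only [map_add, map_mul, map_one, map_pow, map_neg, toXYZ_X0] at huv' hA' hB'
  have hval1 : Phi π R (Phi σ R' (X 1)) = X 1 + toXYZ s * danPoly Q₁ n := by
    rw [Phi_X1, map_add, map_mul, map_add, map_mul, map_one, Phi_X0, Phi_toXYZ,
      Phi_toXYZ, Phi_X1, danPoly]
    linear_combination X (1 : Fin 3) * huv' + hA'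
  have hval2 : Phi σ R' (Phi π R (X 1)) = X 1 + toXYZ s * danPoly Q₂ n := by
    rw [Phi_X1, map_add, map_mul, map_add, map_mul, map_one, Phi_X0, Phi_toXYZ,
      Phi_toXYZ, Phi_X1, danPoly]
    linear_combination X (1 : Fin 3) * huv' + hB'
  refine ⟨AlgEquiv.ofAlgHom (phiBar n Q₁ Q₂ π R hQ) (phiBar n Q₂ Q₁ σ R' hQ') ?_ ?_,
    fun f => phiBar_apply n Q₁ Q₂ π R hQ f⟩
  all_goals {
    apply Ideal.Quotient.algHom_ext
    apply MvPolynomial.algHom_ext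
    intro i
    have h : ∀ g : R3, phiBar n Q₁ Q₂ π R hQ
        (Ideal.Quotient.mkₐ ℂ (Ideal.span {danPoly Q₂ n}) g)
          = Ideal.Quotient.mkₐ ℂ (Ideal.span {danPoly Q₁ n}) (Phi π R g) :=
      fun g => phiBar_apply n Q₁ Q₂ π R hQ g
    have h' : ∀ g : R3, phiBar n Q₂ Q₁ σ R' hQ'
        (Ideal.Quotient.mkₐ ℂ (Ideal.span {danPoly Q₁ n}) g)
          = Ideal.Quotient.mkₐ ℂ (Ideal.span {danPoly Q₂ n}) (Phi σ R' g) :=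
      fun g => phiBar_apply n Q₂ Q₁ σ R' hQ' g
    have hz1 : Ideal.Quotient.mkₐ ℂ (Ideal.span {danPoly Q₁ n})
        (toXYZ s * danPoly Q₁ n) = 0 := danProj_dan_mul Q₁ n (toXYZ s)
    have hz2 : Ideal.Quotient.mkₐ ℂ (Ideal.span {danPoly Q₂ n})
        (toXYZ s * danPoly Q₂ n) = 0 := danProj_dan_mul Q₂ n (toXYZ s)
    match i with
    | 0 => simp only [AlgHom.comp_apply, AlgHom.id_apply, h, h', Phi_X0]
    | 1 =>
      simp only [AlgHom.comp_apply, AlgHom.id_apply, h, h', hval1, hval2,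
        map_add, hz1, hz2, add_zero]
    | 2 => simp only [AlgHom.comp_apply, AlgHom.id_apply, h, h', Phi_X2] }
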